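/- Let d_s, m, k, n ∈ ℕ with n ≥ 1, let L : EuclideanSpace ℝ (Fin k) → ℝ be convex and differentiable, let f : EuclideanSpace ℝ (Fin d_s) → EuclideanSpace ℝ (Fin k) be differentiable, and set L_S = L ∘ f. Write points of (Fin n → EuclideanSpace ℝ (Fin d_s)) × EuclideanSpace ℝ (Fin m) as w = (θ₁,…,θₙ, η), define L₁(w) = L((1/n)·∑_{i=1}^n f(θᵢ)) (independent of η), let L₂ be differentiable, let h > 0 and α ∈ ℝ, and define the modified loss L̃(w) = L₁(w) + L₂(w) + (h/4)·‖gradient L₁ w‖² + (h·α²/4)·‖gradient L₂ w‖². Then at every diagonal point w₀ = (θ,…,θ,0): L̃(w₀) ≤ (1/n)·∑_{i=1}^n L_S(θ) + L₂(w₀) + (h/(4n²))·∑_{i=1}^n ‖gradient L_S θ‖² + (h·α²/4)·‖gradient L₂ w₀‖². -/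

import Mathlib

noncomputable section

/-- The parameter space of the big model obtained by deep fusing `n` small models
with parameters in `ℝ^{d_s}`, with extra parameters `η ∈ ℝ^m`:
points `w = (θ₁,…,θₙ,η)`. -/
abbrev Wsp (d_s m n : ℕ) := EuclideanSpace ℝ ((Fin n × Fin d_s) ⊕ Fin m)

/-- The `i`-th parameter block `θᵢ` of a point `w = (θ₁,…,θₙ,η)`. -/
def blk {d_s m n : ℕ} (w : Wsp d_s m n) (i : Fin n) : EuclideanSpace ℝ (Fin d_s) :=
  WithLp.toLp 2 (fun a => w (Sum.inl (i, a)) : Fin d_s → ℝ)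

/-- The diagonal point `(θ,…,θ,0)`. -/
def diagPt {d_s m n : ℕ} (θ : EuclideanSpace ℝ (Fin d_s)) : Wsp d_s m n :=
  WithLp.toLp 2 (fun z => Sum.elim (fun p : Fin n × Fin d_s => θ p.2) (fun _ => (0 : ℝ)) z :
    ((Fin n × Fin d_s) ⊕ Fin m) → ℝ)

private def projL (d_s m n : ℕ) (i : Fin n) :
    Wsp d_s m n →L[ℝ] EuclideanSpace ℝ (Fin d_s) :=
  LinearMap.toContinuousLinearMap
    { toFun := fun w => WithLp.toLp 2 (fun a => w (Sum.inl (i, a)) : Fin d_s → ℝ)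
      map_add' := fun _ _ => rfl
      map_smul' := fun _ _ => rfl }


open InnerProductSpace RealInnerProductSpace Finset

/-- **Modified loss theorem (Theorem 1 of the paper).** With convex differentiable
training loss `L`, small model `f`, `L_S = L ∘ f`,
`L₁(w) = L((1/n)∑ᵢ f(θᵢ))`, and modified loss
`L̃(w) = L₁(w) + L₂(w) + (h/4)‖∇L₁(w)‖² + (hα²/4)‖∇L₂(w)‖²`, at every diagonal
point `w₀ = (θ,…,θ,0)`:
`L̃(w₀) ≤ (1/n)∑ᵢ L_S(θ) + L₂(w₀) + (h/(4n²))∑ᵢ‖∇L_S(θ)‖² + (hα²/4)‖∇L₂(w₀)‖²`. -/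
theorem stmt_17 (d_s m k n : ℕ) (hn : 1 ≤ n)
    (L : EuclideanSpace ℝ (Fin k) → ℝ)
    (hLconv : ConvexOn ℝ Set.univ L) (hLdiff : Differentiable ℝ L)
    (f : EuclideanSpace ℝ (Fin d_s) → EuclideanSpace ℝ (Fin k))
    (hf : Differentiable ℝ f)
    (L_S : EuclideanSpace ℝ (Fin d_s) → ℝ) (hLS : L_S = L ∘ f)
    (L₁ : Wsp d_s m n → ℝ)
    (hL₁ : L₁ = fun w => L ((1 / (n : ℝ)) • ∑ i : Fin n, f (blk w i)))
    (L₂ : Wsp d_s m n → ℝ) (hL₂ : Differentiable ℝ L₂)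
    (h : ℝ) (hh : 0 < h) (α : ℝ)
    (Lt : Wsp d_s m n → ℝ)
    (hLt : Lt = fun w => L₁ w + L₂ w + (h / 4) * ‖gradient L₁ w‖ ^ 2
      + (h * α ^ 2 / 4) * ‖gradient L₂ w‖ ^ 2)
    (θ : EuclideanSpace ℝ (Fin d_s)) :
    Lt (diagPt θ)
      ≤ (1 / (n : ℝ)) * ∑ _i : Fin n, L_S θ + L₂ (diagPt θ)
        + (h / (4 * (n : ℝ) ^ 2)) * ∑ _i : Fin n, ‖gradient L_S θ‖ ^ 2
        + (h * α ^ 2 / 4) * ‖gradient L₂ (diagPt θ)‖ ^ 2 := by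
  subst hLS hL₁ hLt
  have hn0 : (0 : ℝ) < (n : ℝ) := by exact_mod_cast Nat.lt_of_lt_of_le Nat.zero_lt_one hn
  have hn0' : (n : ℝ) ≠ 0 := ne_of_gt hn0
  set w₀ : Wsp d_s m n := diagPt θ with hw₀
  have hblk : ∀ i : Fin n, blk w₀ i = θ := fun i => rfl
  set DL := fderiv ℝ L (f θ) with hDL
  set Df := fderiv ℝ f θ with hDf
  set gS := gradient (L ∘ f) θ with hgS
  -- gradient of L_S
  have hLSfd : HasFDerivAt (L ∘ f) (DL.comp Df) θ :=
    ((hLdiff (f θ)).hasFDerivAt).comp θ (hf θ).hasFDerivAt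
  have hdualS : (toDual ℝ (EuclideanSpace ℝ (Fin d_s))) gS = DL.comp Df := by
    have h1 : HasFDerivAt (L ∘ f) ((toDual ℝ _) gS) θ :=
      hasGradientAt_iff_hasFDerivAt.mp (hLSfd.differentiableAt.hasGradientAt)
    exact h1.unique hLSfd
  have hgSapp : ∀ u : EuclideanSpace ℝ (Fin d_s), ⟪gS, u⟫ = DL (Df u) := by
    intro u
    have := congrFun (congrArg DFunLike.coe hdualS) u
    simpa [toDual_apply_apply] using this
  -- value of the inner function at w₀
  have hval : (1 / (n : ℝ)) • ∑ i : Fin n, f (blk w₀ i) = f θ := by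
    simp only [hblk, Finset.sum_const, Finset.card_univ, Fintype.card_fin]
    rw [← Nat.cast_smul_eq_nsmul ℝ, smul_smul]
    simp [hn0']
  -- derivative of the inner function
  set G : Wsp d_s m n →L[ℝ] EuclideanSpace ℝ (Fin k) :=
    (1 / (n : ℝ)) • ∑ i : Fin n, Df.comp (projL d_s m n i) with hG
  have hgfd : HasFDerivAt (fun w : Wsp d_s m n => (1 / (n : ℝ)) • ∑ i : Fin n, f (blk w i))
      G w₀ := by
    have hterm : ∀ i : Fin n,
        HasFDerivAt (fun w : Wsp d_s m n => f (blk w i)) (Df.comp (projL d_s m n i)) w₀ := by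
      intro i
      exact ((hf θ).hasFDerivAt).comp w₀ ((projL d_s m n i).hasFDerivAt)
    exact (HasFDerivAt.fun_sum (fun i _ => hterm i)).const_smul (1 / (n : ℝ))
  have hL₁fd : HasFDerivAt (fun w : Wsp d_s m n =>
      L ((1 / (n : ℝ)) • ∑ i : Fin n, f (blk w i))) (DL.comp G) w₀ := by
    have hLat : HasFDerivAt L DL ((1 / (n : ℝ)) • ∑ i : Fin n, f (blk w₀ i)) := by
      rw [hval]; exact (hLdiff (f θ)).hasFDerivAt
    exact hLat.comp w₀ hgfd
  -- candidate gradient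
  set c : Wsp d_s m n :=
    WithLp.toLp 2 (fun z => Sum.elim (fun p : Fin n × Fin d_s => (1 / (n : ℝ)) * gS p.2)
      (fun _ => (0 : ℝ)) z : ((Fin n × Fin d_s) ⊕ Fin m) → ℝ) with hc
  have hdual : (toDual ℝ (Wsp d_s m n)) c = DL.comp G := by
    ext v
    rw [toDual_apply_apply]
    have hRHS : (DL.comp G) v = (1 / (n : ℝ)) * ∑ i : Fin n, ⟪gS, projL d_s m n i v⟫ := by
      simp only [ContinuousLinearMap.comp_apply, hG, ContinuousLinearMap.smul_apply,
        ContinuousLinearMap.sum_apply, map_smul, map_sum, smul_eq_mul]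
      congr 1
      exact Finset.sum_congr rfl fun i _ => (hgSapp _).symm
    rw [hRHS]
    have hLHS : ⟪c, v⟫ = ∑ i : Fin n, ∑ a : Fin d_s, ((1 / (n : ℝ)) * gS a) * v (Sum.inl (i, a)) := by
      rw [PiLp.inner_apply]
      rw [Fintype.sum_sum_type]
      simp only [hc, PiLp.toLp_apply, Sum.elim_inl, Sum.elim_inr, RCLike.inner_apply, conj_trivial,
        zero_mul, mul_zero, Finset.sum_const_zero, add_zero]
      rw [Fintype.sum_prod_type]
      exact Finset.sum_congr rfl fun i _ => Finset.sum_congr rfl fun a _ => mul_comm _ _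
    rw [hLHS]
    rw [Finset.mul_sum]
    refine Finset.sum_congr rfl fun i _ => ?_
    rw [PiLp.inner_apply, Finset.mul_sum]
    refine Finset.sum_congr rfl fun a _ => ?_
    simp [projL, mul_assoc]
    exact Or.inl ((mul_comm _ _).trans rfl)
  have hgrad1 : gradient (fun w : Wsp d_s m n =>
      L ((1 / (n : ℝ)) • ∑ i : Fin n, f (blk w i))) w₀ = c := by
    have : HasGradientAt (fun w : Wsp d_s m n =>
        L ((1 / (n : ℝ)) • ∑ i : Fin n, f (blk w i))) c w₀ := by
      rw [hasGradientAt_iff_hasFDerivAt, hdual]; exact hL₁fd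
    exact this.gradient
  -- norm of c
  have hnormc : ‖c‖ ^ 2 = (1 / (n : ℝ)) * ‖gS‖ ^ 2 := by
    rw [← real_inner_self_eq_norm_sq, ← real_inner_self_eq_norm_sq]
    rw [PiLp.inner_apply, PiLp.inner_apply, Fintype.sum_sum_type]
    simp only [hc, PiLp.toLp_apply, Sum.elim_inl, Sum.elim_inr, RCLike.inner_apply, conj_trivial,
      zero_mul, Finset.sum_const_zero, add_zero]
    rw [Fintype.sum_prod_type]
    simp only [Finset.sum_const, Finset.card_univ, Fintype.card_fin, nsmul_eq_mul,
      Finset.mul_sum]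
    refine Finset.sum_congr rfl fun a _ => ?_
    field_simp
  -- put everything together
  have hvalL : L ((1 / (n : ℝ)) • ∑ i : Fin n, f (blk w₀ i)) = (L ∘ f) θ := by
    rw [hval]; rfl
  beta_reduce
  rw [hgrad1, hvalL, hnormc]
  simp only [Finset.sum_const, Finset.card_univ, Fintype.card_fin, nsmul_eq_mul]
  apply le_of_eq
  field_simp
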